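/- Let $p_1(x), \ldots, p_m(x)$ be real-rooted polynomials of the same degree $d$ with positive leading coefficients that have a common interlacing. Then there exists an index $j \in [m]$ such that the largest root of $p_j(x)$ is at most the largest root of $\sum_{i=1}^m p_i(x)$. -/
import Mathlib


/-- The largest real root of a polynomial, as a supremum of its real root set. -/
noncomputable def maxRoot (p : Polynomial ℝ) : ℝ := sSup {x : ℝ | p.IsRoot x}

/-- `Interlaces d f p` means `f` is a real-rooted polynomial of degree `d - 1`
interlacing the real-rooted degree-`d` polynomial `p`:
writing `f = a₀ ∏ (x - aᵢ)` and `p = b₀ ∏ (x - bᵢ)`, the roots satisfy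
`b₁ ≤ a₁ ≤ b₂ ≤ a₂ ≤ ⋯ ≤ a_{d-1} ≤ b_d`. -/
def Interlaces (d : ℕ) (f p : Polynomial ℝ) : Prop :=
  ∃ (a0 b0 : ℝ) (a : Fin (d - 1) → ℝ) (b : Fin d → ℝ),
    a0 ≠ 0 ∧ b0 ≠ 0 ∧
    f = Polynomial.C a0 * ∏ i, (Polynomial.X - Polynomial.C (a i)) ∧
    p = Polynomial.C b0 * ∏ i, (Polynomial.X - Polynomial.C (b i)) ∧
    ∀ i : Fin (d - 1),
      b ⟨i.val, by have := i.isLt; omega⟩ ≤ a i ∧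
        a i ≤ b ⟨i.val + 1, by have := i.isLt; omega⟩

lemma rootSet_eq_range {n : ℕ} {c : ℝ} (hc : c ≠ 0) (r : Fin n → ℝ) :
    {x : ℝ | (Polynomial.C c * ∏ k, (Polynomial.X - Polynomial.C (r k))).IsRoot x}
      = Set.range r := by
  ext x
  simp only [Set.mem_setOf_eq, Polynomial.IsRoot, Polynomial.eval_mul, Polynomial.eval_C,
    Polynomial.eval_prod, Polynomial.eval_sub, Polynomial.eval_X, mul_eq_zero, hc, false_or,
    Finset.prod_eq_zero_iff, Finset.mem_univ, true_and, sub_eq_zero, Set.mem_range]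
  exact ⟨fun ⟨k, h⟩ => ⟨k, h.symm⟩, fun ⟨k, h⟩ => ⟨k, h.symm⟩⟩

lemma leadingCoeff_prod_eq {n : ℕ} (c : ℝ) (r : Fin n → ℝ) :
    (Polynomial.C c * ∏ k, (Polynomial.X - Polynomial.C (r k))).leadingCoeff = c := by
  rw [Polynomial.leadingCoeff_mul, Polynomial.leadingCoeff_C,
    (Polynomial.monic_prod_of_monic _ _ fun k _ => Polynomial.monic_X_sub_C (r k)).leadingCoeff,
    mul_one]

lemma fin_chain {d : ℕ} (b : Fin d → ℝ)
    (h : ∀ k (hk : k + 1 < d), b ⟨k, by omega⟩ ≤ b ⟨k + 1, hk⟩) :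
    ∀ (j k : ℕ) (hj : j < d) (hk : k < d), j ≤ k → b ⟨j, hj⟩ ≤ b ⟨k, hk⟩ := by
  intro j k
  induction k with
  | zero =>
    intro hj hk hjk
    have : j = 0 := by omega
    subst this; exact le_refl _
  | succ n ih =>
    intro hj hk hjk
    rcases Nat.lt_or_ge j (n + 1) with h1 | h1
    · exact le_trans (ih hj (by omega) (by omega)) (h n hk)
    · have : j = n + 1 := by omega
      subst this; exact le_refl _

theorem stmt17 (m d : ℕ) (hm : 0 < m) (hd : 0 < d) (p : Fin m → Polynomial ℝ)
    (hdeg : ∀ i, (p i).degree = d) (hlead : ∀ i, 0 < (p i).leadingCoeff)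
    (hcommon : ∃ f : Polynomial ℝ, ∀ i, Interlaces d f (p i)) :
    ∃ j : Fin m, maxRoot (p j) ≤ maxRoot (∑ i, p i) := by
  have hmne : Nonempty (Fin m) := ⟨⟨0, hm⟩⟩
  obtain ⟨f, hf⟩ := hcommon
  choose a0 b0 a b ha0 hb0 hfeq hpeq hab using hf
  -- positivity of b0
  have hb0pos : ∀ i, 0 < b0 i := by
    intro i
    have := hlead i
    rw [hpeq i, leadingCoeff_prod_eq] at this
    exact this
  -- monotonicity of b i
  have hbmono : ∀ i, ∀ (j k : ℕ) (hj : j < d) (hk : k < d), j ≤ k →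
      b i ⟨j, hj⟩ ≤ b i ⟨k, hk⟩ := by
    intro i
    refine fin_chain (b i) ?_
    intro k hk
    exact le_trans (hab i ⟨k, by omega⟩).1 (hab i ⟨k, by omega⟩).2
  set blast : Fin m → ℝ := fun i => b i ⟨d - 1, by omega⟩ with hblast
  have hble : ∀ i (k : Fin d), b i k ≤ blast i := by
    intro i k
    exact hbmono i k.val (d - 1) k.isLt (by omega) (by omega)
  -- maxRoot of p i is blast i
  have hmaxp : ∀ i, maxRoot (p i) = blast i := by
    intro i
    unfold maxRoot
    rw [hpeq i, rootSet_eq_range (hb0 i)]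
    refine IsGreatest.csSup_eq ⟨⟨_, rfl⟩, ?_⟩
    rintro x ⟨k, rfl⟩
    exact hble i k
  -- find α
  obtain ⟨α, hα1, hα2⟩ : ∃ α : ℝ, (∀ i, α ≤ blast i) ∧
      (∀ i (k : Fin d), k.val < d - 1 → b i k ≤ α) := by
    rcases Nat.lt_or_ge d 2 with hd1 | hd2
    · -- d = 1
      obtain ⟨j0, hj0⟩ := Finite.exists_min blast
      exact ⟨blast j0, hj0, fun i k hk => absurd hk (by omega)⟩
    · -- d ≥ 2 : take α the largest root of f
      set α := sSup (Set.range (a ⟨0, hm⟩)) with hαdef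
      have hrange : ∀ i, Set.range (a i) = Set.range (a ⟨0, hm⟩) := by
        intro i
        rw [← rootSet_eq_range (ha0 i) (a i), ← rootSet_eq_range (ha0 ⟨0, hm⟩) (a ⟨0, hm⟩),
          ← hfeq i, ← hfeq ⟨0, hm⟩]
      have hne : ∀ i, (Set.range (a i)).Nonempty := fun i =>
        Set.range_nonempty_iff_nonempty.2 ⟨⟨0, by omega⟩⟩
      have hαub : ∀ i k, a i k ≤ α := by
        intro i k
        rw [hαdef, ← hrange i]
        exact le_csSup (Set.Finite.bddAbove (Set.finite_range _)) (Set.mem_range_self k)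
      have hαmem : ∀ i, α ∈ Set.range (a i) := by
        intro i
        rw [hrange i, hαdef]
        exact Set.Nonempty.csSup_mem (hne ⟨0, hm⟩) (Set.finite_range _)
      refine ⟨α, ?_, ?_⟩
      · intro i
        obtain ⟨k0, hk0⟩ := hαmem i
        calc α = a i k0 := hk0.symm
          _ ≤ b i ⟨k0.val + 1, by have := k0.isLt; omega⟩ := (hab i k0).2
          _ ≤ blast i := by
              have hk0 := k0.isLt
              exact hbmono i (k0.val + 1) (d - 1) (by omega) (by omega) (by omega)
      · intro i k hk
        have h1 : b i k ≤ a i ⟨k.val, hk⟩ := by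
          have := (hab i ⟨k.val, hk⟩).1
          simpa using this
        exact le_trans h1 (hαub i ⟨k.val, hk⟩)
  -- sign of p i on [α, blast i]
  have hsign : ∀ i x, α ≤ x → x ≤ blast i → (p i).eval x ≤ 0 := by
    intro i x hx1 hx2
    rw [hpeq i]
    simp only [Polynomial.eval_mul, Polynomial.eval_C, Polynomial.eval_prod,
      Polynomial.eval_sub, Polynomial.eval_X]
    have hmem : (⟨d - 1, by omega⟩ : Fin d) ∈ Finset.univ := Finset.mem_univ _
    rw [← Finset.mul_prod_erase Finset.univ _ hmem]
    have h1 : x - blast i ≤ 0 := by linarith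
    have h2 : (0:ℝ) ≤ ∏ k ∈ Finset.univ.erase (⟨d - 1, by omega⟩ : Fin d), (x - b i k) := by
      refine Finset.prod_nonneg ?_
      intro k hk
      have hkne : k ≠ (⟨d - 1, by omega⟩ : Fin d) := (Finset.mem_erase.1 hk).1
      have hklt : k.val < d - 1 := by
        have := k.isLt
        rcases Nat.lt_or_ge k.val (d - 1) with h | h
        · exact h
        · exact absurd (Fin.ext (show k.val = d - 1 by omega)) hkne
      have := hα2 i k hklt
      linarith
    have := mul_nonpos_of_nonpos_of_nonneg h1 h2
    exact mul_nonpos_of_nonneg_of_nonpos (le_of_lt (hb0pos i)) this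
  -- the sum polynomial
  set P : Polynomial ℝ := ∑ i, p i with hP
  have hndeg : ∀ i, (p i).natDegree = d := fun i =>
    Polynomial.natDegree_eq_of_degree_eq_some (hdeg i)
  have hcoeff : P.coeff d = ∑ i, (p i).leadingCoeff := by
    rw [hP, Polynomial.finset_sum_coeff]
    congr 1
    ext i
    rw [Polynomial.leadingCoeff, hndeg i]
  have hcoeffpos : 0 < P.coeff d := by
    rw [hcoeff]
    exact Finset.sum_pos (fun i _ => hlead i) Finset.univ_nonempty
  have hdegP : P.degree = d := by
    refine le_antisymm ?_ (Polynomial.le_degree_of_ne_zero (ne_of_gt hcoeffpos))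
    refine le_trans (Polynomial.degree_sum_le _ _) ?_
    exact Finset.sup_le fun i _ => le_of_eq (hdeg i)
  have hPne : P ≠ 0 := by
    intro h
    rw [h, Polynomial.degree_zero] at hdegP
    exact absurd hdegP.symm (by simp)
  have hleadP : 0 < P.leadingCoeff := by
    rwa [Polynomial.leadingCoeff, Polynomial.natDegree_eq_of_degree_eq_some hdegP]
  have hdegpos : 0 < P.degree := by
    rw [hdegP]; exact_mod_cast hd
  have htend := Polynomial.tendsto_atTop_of_leadingCoeff_nonneg P hdegpos (le_of_lt hleadP)
  -- from a nonpositive value, there is a root to the right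
  have keyroot : ∀ x0 : ℝ, P.eval x0 ≤ 0 → ∃ y, P.IsRoot y ∧ x0 ≤ y := by
    intro x0 hx0
    obtain ⟨N, hN⟩ := ((htend.eventually_ge_atTop 1).and (Filter.eventually_ge_atTop x0)).exists
    have hIcc : (0:ℝ) ∈ Set.Icc (P.eval x0) (P.eval N) := ⟨hx0, by linarith [hN.1]⟩
    obtain ⟨y, hy, hy0⟩ := intermediate_value_Icc hN.2 P.continuousOn hIcc
    exact ⟨y, hy0, hy.1⟩
  -- root set of P
  have hSfin : {x : ℝ | P.IsRoot x}.Finite := Polynomial.finite_setOf_isRoot hPne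
  have hevalα : P.eval α ≤ 0 := by
    rw [hP, Polynomial.eval_finset_sum]
    exact Finset.sum_nonpos fun i _ => hsign i α le_rfl (hα1 i)
  obtain ⟨y, hy, hαy⟩ := keyroot α hevalα
  have hbdd : BddAbove {x : ℝ | P.IsRoot x} := hSfin.bddAbove
  set t := maxRoot P with ht
  have hyt : y ≤ t := le_csSup hbdd hy
  have htub : ∀ z, P.IsRoot z → z ≤ t := fun z hz => le_csSup hbdd hz
  by_contra hcon
  push_neg at hcon
  have hcon' : ∀ j, t < blast j := by
    intro j
    have := hcon j
    rwa [hmaxp j] at this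
  obtain ⟨j0, hj0⟩ := Finite.exists_min blast
  set x0 := (t + blast j0) / 2 with hx0def
  have htx0 : t < x0 := by have := hcon' j0; rw [hx0def]; linarith
  have hx0b : ∀ j, x0 ≤ blast j := by
    intro j
    have := hcon' j0
    have h2 := hj0 j
    rw [hx0def]; linarith
  have hαx0 : α ≤ x0 := by linarith
  have hevalx0 : P.eval x0 ≤ 0 := by
    rw [hP, Polynomial.eval_finset_sum]
    exact Finset.sum_nonpos fun i _ => hsign i x0 hαx0 (hx0b i)
  obtain ⟨y', hy', hx0y'⟩ := keyroot x0 hevalx0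
  have := htub y' hy'
  linarith
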